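/- For every A ∈ SL₂±(ℝ), the stable length of the associated isometry of ℍ² equals 2·log ρ(A), where ρ(A) is the spectral radius of A. -/

import Mathlib

open Complex Matrix UpperHalfPlane
open scoped ENNReal NNReal

lemma im_moebius_aux (a b c d : ℝ) (z : ℂ) (hz : z.im ≠ 0) (hdet : a * d - b * c ≠ 0) :
    (((a : ℂ) * z + b) / ((c : ℂ) * z + d)).im
      = (a * d - b * c) * z.im / Complex.normSq ((c : ℂ) * z + d) := by
  have hden : ((c : ℂ) * z + d) ≠ 0 := by
    intro h
    have him : c * z.im = 0 := by
      have := congrArg Complex.im h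
      simpa using this
    have hc : c = 0 := by
      rcases mul_eq_zero.1 him with h' | h'
      · exact h'
      · exact absurd h' hz
    have hre : c * z.re + d = 0 := by
      have := congrArg Complex.re h
      simpa using this
    have hd : d = 0 := by simpa [hc] using hre
    exact hdet (by simp [hc, hd])
  rw [Complex.div_im]
  have hnsq : Complex.normSq ((c : ℂ) * z + d) ≠ 0 := by
    simpa [Complex.normSq_eq_zero] using hden
  simp only [Complex.add_re, Complex.add_im, Complex.mul_re, Complex.mul_im, Complex.ofReal_re,
    Complex.ofReal_im]
  ring

lemma im_moebius_pos (a b c d : ℝ) (z : ℂ) (hz : z.im ≠ 0)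
    (hdet : 0 < (a * d - b * c) * z.im) :
    0 < (((a : ℂ) * z + b) / ((c : ℂ) * z + d)).im := by
  have hdet' : a * d - b * c ≠ 0 := by
    intro h; rw [h] at hdet; simp at hdet
  rw [im_moebius_aux a b c d z hz hdet']
  have hden : ((c : ℂ) * z + d) ≠ 0 := by
    intro h
    have him : c * z.im = 0 := by
      have := congrArg Complex.im h
      simpa using this
    have hc : c = 0 := by
      rcases mul_eq_zero.1 him with h' | h'
      · exact h'
      · exact absurd h' hz
    have hre : c * z.re + d = 0 := by
      have := congrArg Complex.re h
      simpa using this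
    have hd : d = 0 := by simpa [hc] using hre
    exact hdet' (by simp [hc, hd])
  have : 0 < Complex.normSq ((c : ℂ) * z + d) := Complex.normSq_pos.2 hden
  positivity

/-- The (anti-)Möbius action of a matrix with determinant `±1` on `ℂ`:
`z ↦ (az+b)/(cz+d)` if `det = 1`, and `z ↦ (az̄+b)/(cz̄+d)` otherwise. -/
noncomputable def moebiusMap (A : Matrix (Fin 2) (Fin 2) ℝ) (z : ℂ) : ℂ :=
  if A.det = 1 then
    ((A 0 0 : ℂ) * z + A 0 1) / ((A 1 0 : ℂ) * z + A 1 1)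
  else
    ((A 0 0 : ℂ) * (starRingEnd ℂ z) + A 0 1) / ((A 1 0 : ℂ) * (starRingEnd ℂ z) + A 1 1)

lemma moebiusMap_im_pos (A : Matrix (Fin 2) (Fin 2) ℝ)
    (hA : A.det = 1 ∨ A.det = -1) (z : ℍ) : 0 < (moebiusMap A (z : ℂ)).im := by
  have hdet2 : A.det = A 0 0 * A 1 1 - A 0 1 * A 1 0 := Matrix.det_fin_two A
  by_cases hd : A.det = 1
  · rw [moebiusMap, if_pos hd]
    apply im_moebius_pos _ _ _ _ _ (ne_of_gt z.2)
    rw [← hdet2, hd]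
    simpa using z.2
  · rw [moebiusMap, if_neg hd]
    have hdm : A.det = -1 := hA.resolve_left hd
    have hzc : ((starRingEnd ℂ) (z : ℂ)).im = -(z : ℂ).im := by simp
    apply im_moebius_pos
    · rw [hzc]; simpa using ne_of_gt z.2
    · rw [hzc, ← hdet2, hdm]; simpa using z.2

/-- The isometry of the hyperbolic plane `ℍ` induced by a matrix of
determinant `±1` (for other matrices we take the identity as junk value). -/
noncomputable def moebius (A : Matrix (Fin 2) (Fin 2) ℝ) (z : ℍ) : ℍ :=
  if h : A.det = 1 ∨ A.det = -1 then ⟨moebiusMap A (z : ℂ), moebiusMap_im_pos A h z⟩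
  else z

/-- The Euclidean operator norm of a `2 × 2` real matrix. -/
noncomputable def l2OpNorm (A : Matrix (Fin 2) (Fin 2) ℝ) : ℝ :=
  ‖Matrix.toEuclideanCLM (𝕜 := ℝ) A‖

/-- The spectral radius of a real matrix (computed over `ℂ`, so that complex
eigenvalues are taken into account). -/
noncomputable def specRad (A : Matrix (Fin 2) (Fin 2) ℝ) : ℝ :=
  (spectralRadius ℂ (A.map (algebraMap ℝ ℂ))).toReal



lemma den_ne_zero (c d : ℝ) (z : ℂ) (hz : z.im ≠ 0) (h : ¬(c = 0 ∧ d = 0)) :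
    (c : ℂ) * z + d ≠ 0 := by
  intro h0
  have him : c * z.im = 0 := by
    have := congrArg Complex.im h0
    simpa using this
  have hc : c = 0 := by
    rcases mul_eq_zero.1 him with h' | h'
    · exact h'
    · exact absurd h' hz
  have hre : c * z.re + d = 0 := by
    have := congrArg Complex.re h0
    simpa using this
  exact h ⟨hc, by simpa [hc] using hre⟩

lemma moebius_core (a b c d p q r s u : ℂ) (h1 : r * u + s ≠ 0) :
    (a * ((p * u + q) / (r * u + s)) + b) / (c * ((p * u + q) / (r * u + s)) + d)
      = ((a * p + b * r) * u + (a * q + b * s)) / ((c * p + d * r) * u + (c * q + d * s)) := by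
  have hw : c * ((p * u + q) / (r * u + s)) + d
      = ((c * p + d * r) * u + (c * q + d * s)) / (r * u + s) := by
    rw [eq_div_iff h1]
    simp only [add_mul, mul_assoc, div_mul_cancel₀ _ h1]
    ring
  have hnum : a * ((p * u + q) / (r * u + s)) + b
      = ((a * p + b * r) * u + (a * q + b * s)) / (r * u + s) := by
    rw [eq_div_iff h1]
    simp only [add_mul, mul_assoc, div_mul_cancel₀ _ h1]
    ring
  rw [hw, hnum, div_div_div_eq,
    mul_comm ((r * u + s)) (((c * p + d * r) * u + (c * q + d * s))), mul_div_mul_right _ _ h1]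

lemma row_ne_zero (M : Matrix (Fin 2) (Fin 2) ℝ) (h : M.det ≠ 0) :
    ¬(M 1 0 = 0 ∧ M 1 1 = 0) := by
  rintro ⟨h1, h2⟩
  exact h (by rw [Matrix.det_fin_two]; simp [h1, h2])

lemma moebiusMap_comp (M N : Matrix (Fin 2) (Fin 2) ℝ) (hM : M.det = 1 ∨ M.det = -1)
    (hN : N.det = 1 ∨ N.det = -1) (z : ℂ) (hz : z.im ≠ 0) :
    moebiusMap M (moebiusMap N z) = moebiusMap (M * N) z := by
  have hMn : M.det ≠ 0 := by rcases hM with h | h <;> rw [h] <;> norm_num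
  have hNn : N.det ≠ 0 := by rcases hN with h | h <;> rw [h] <;> norm_num
  have hdetMN : (M * N).det = M.det * N.det := by rw [Matrix.det_mul]
  have hzc : (starRingEnd ℂ z).im ≠ 0 := by simpa using hz
  have hden : ((N 1 0 : ℂ) * z + N 1 1) ≠ 0 := den_ne_zero _ _ _ hz (row_ne_zero N hNn)
  have hdenc : ((N 1 0 : ℂ) * (starRingEnd ℂ z) + N 1 1) ≠ 0 :=
    den_ne_zero _ _ _ hzc (row_ne_zero N hNn)
  have hmul : ∀ i j, ((M * N) i j : ℂ) = (M i 0 : ℂ) * N 0 j + (M i 1 : ℂ) * N 1 j := by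
    intro i j
    rw [Matrix.mul_apply, Fin.sum_univ_two]
    push_cast
    ring
  by_cases hm : M.det = 1 <;> by_cases hn : N.det = 1
  · have hmn : (M * N).det = 1 := by rw [hdetMN, hm, hn]; ring
    simp only [moebiusMap]
    rw [if_pos hn, if_pos hm, if_pos hmn]
    rw [moebius_core _ _ _ _ _ _ _ _ _ hden, hmul 0 0, hmul 0 1, hmul 1 0, hmul 1 1]
  · have hmn : ¬ (M * N).det = 1 := by
      rw [hdetMN, hm, hN.resolve_left hn]; norm_num
    simp only [moebiusMap]
    rw [if_neg hn, if_pos hm, if_neg hmn]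
    rw [moebius_core _ _ _ _ _ _ _ _ _ hdenc, hmul 0 0, hmul 0 1, hmul 1 0, hmul 1 1]
  · have hmn : ¬ (M * N).det = 1 := by
      rw [hdetMN, hM.resolve_left hm, hn]; norm_num
    simp only [moebiusMap]
    rw [if_pos hn, if_neg hm, if_neg hmn]
    have : starRingEnd ℂ (((N 0 0 : ℂ) * z + N 0 1) / ((N 1 0 : ℂ) * z + N 1 1))
        = ((N 0 0 : ℂ) * (starRingEnd ℂ z) + N 0 1)
          / ((N 1 0 : ℂ) * (starRingEnd ℂ z) + N 1 1) := by
      simp [map_div₀]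
    rw [this, moebius_core _ _ _ _ _ _ _ _ _ hdenc, hmul 0 0, hmul 0 1, hmul 1 0, hmul 1 1]
  · have hmn : (M * N).det = 1 := by
      rw [hdetMN, hM.resolve_left hm, hN.resolve_left hn]; ring
    simp only [moebiusMap]
    rw [if_neg hn, if_neg hm, if_pos hmn]
    have : starRingEnd ℂ (((N 0 0 : ℂ) * (starRingEnd ℂ z) + N 0 1)
          / ((N 1 0 : ℂ) * (starRingEnd ℂ z) + N 1 1))
        = ((N 0 0 : ℂ) * z + N 0 1) / ((N 1 0 : ℂ) * z + N 1 1) := by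
      simp [map_div₀]
    rw [this, moebius_core _ _ _ _ _ _ _ _ _ hden, hmul 0 0, hmul 0 1, hmul 1 0, hmul 1 1]

lemma moebius_comp (M N : Matrix (Fin 2) (Fin 2) ℝ) (hM : M.det = 1 ∨ M.det = -1)
    (hN : N.det = 1 ∨ N.det = -1) (z : ℍ) :
    moebius M (moebius N z) = moebius (M * N) z := by
  have hMN : (M * N).det = 1 ∨ (M * N).det = -1 := by
    rw [Matrix.det_mul]
    rcases hM with h | h <;> rcases hN with h' | h' <;> simp [h, h']
  have e1 : ((moebius M (moebius N z) : ℍ) : ℂ) = moebiusMap M (moebiusMap N (z : ℂ)) := by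
    simp only [moebius, dif_pos hM, dif_pos hN]
  have e2 : ((moebius (M * N) z : ℍ) : ℂ) = moebiusMap (M * N) (z : ℂ) := by
    simp only [moebius, dif_pos hMN]
  exact UpperHalfPlane.ext (e1.trans ((moebiusMap_comp M N hM hN _ z.2.ne').trans e2.symm))

lemma det_pow_pm (A : Matrix (Fin 2) (Fin 2) ℝ) (hA : A.det = 1 ∨ A.det = -1) (n : ℕ) :
    (A ^ n).det = 1 ∨ (A ^ n).det = -1 := by
  rw [Matrix.det_pow]
  rcases hA with h | h
  · left; rw [h]; simp
  · rcases Nat.even_or_odd n with he | ho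
    · left; rw [h]; exact he.neg_one_pow
    · right; rw [h]; exact ho.neg_one_pow

lemma moebius_one (z : ℍ) : moebius 1 z = z := by
  have h1 : (1 : Matrix (Fin 2) (Fin 2) ℝ).det = 1 ∨ (1 : Matrix (Fin 2) (Fin 2) ℝ).det = -1 :=
    Or.inl Matrix.det_one
  apply UpperHalfPlane.ext
  have : ((moebius 1 z : ℍ) : ℂ) = moebiusMap 1 (z : ℂ) := by
    simp only [moebius, dif_pos h1]
  rw [this, moebiusMap, if_pos Matrix.det_one]
  simp [Matrix.one_apply]

lemma moebius_iterate (A : Matrix (Fin 2) (Fin 2) ℝ) (hA : A.det = 1 ∨ A.det = -1) (n : ℕ)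
    (z : ℍ) : (moebius A)^[n] z = moebius (A ^ n) z := by
  induction n with
  | zero => simp [moebius_one]
  | succ n ih =>
    rw [Function.iterate_succ_apply', ih, moebius_comp A (A ^ n) hA (det_pow_pm A hA n),
      ← pow_succ']

lemma key_calc (a b c d : ℝ) (h : a * d - b * c = 1) :
    1 + dist (((a : ℂ) * Complex.I + b) / ((c : ℂ) * Complex.I + d)) Complex.I ^ 2 /
        (2 * (((a : ℂ) * Complex.I + b) / ((c : ℂ) * Complex.I + d)).im * 1)
      = (a ^ 2 + b ^ 2 + c ^ 2 + d ^ 2) / 2 := by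
  have hcd : ¬(c = 0 ∧ d = 0) := by
    rintro ⟨h1, h2⟩; rw [h1, h2] at h; simp at h
  have hden : ((c : ℂ) * Complex.I + d) ≠ 0 := den_ne_zero c d Complex.I (by simp) hcd
  have hns : Complex.normSq ((c : ℂ) * Complex.I + d) = c ^ 2 + d ^ 2 := by
    simp [Complex.normSq_apply]; ring
  have hcd2 : c ^ 2 + d ^ 2 ≠ 0 := by
    intro h0; rw [← hns] at h0; exact hden (Complex.normSq_eq_zero.1 h0)
  have him : (((a : ℂ) * Complex.I + b) / ((c : ℂ) * Complex.I + d)).im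
      = 1 / (c ^ 2 + d ^ 2) := by
    have hcd2' : d * d + c * c ≠ 0 := by intro h0; apply hcd2; nlinarith
    rw [Complex.div_im]
    simp [Complex.normSq_apply]
    field_simp
    have hcd3 : d ^ 2 + c ^ 2 ≠ 0 := by rwa [add_comm]
    field_simp
    linear_combination (c ^ 2 + d ^ 2) * h
  have hdiff : ((a : ℂ) * Complex.I + b) / ((c : ℂ) * Complex.I + d) - Complex.I
      = (((b + c : ℝ) : ℂ) + ((a - d : ℝ) : ℂ) * Complex.I) / ((c : ℂ) * Complex.I + d) := by
    rw [eq_div_iff hden, sub_mul, div_mul_cancel₀ _ hden]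
    push_cast
    linear_combination (-(c : ℂ)) * Complex.I_sq
  have hd2 : dist (((a : ℂ) * Complex.I + b) / ((c : ℂ) * Complex.I + d)) Complex.I ^ 2
      = ((b + c) ^ 2 + (a - d) ^ 2) / (c ^ 2 + d ^ 2) := by
    rw [Complex.dist_eq, Complex.sq_norm, hdiff, Complex.normSq_div,
      Complex.normSq_add_mul_I, hns]
  rw [hd2, him]
  field_simp
  nlinarith [h]

lemma cosh_dist_moebius (B : Matrix (Fin 2) (Fin 2) ℝ) (hB : B.det = 1 ∨ B.det = -1) :
    Real.cosh (dist (moebius B UpperHalfPlane.I) UpperHalfPlane.I)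
      = (B 0 0 ^ 2 + B 0 1 ^ 2 + B 1 0 ^ 2 + B 1 1 ^ 2) / 2 := by
  have hco : ((moebius B UpperHalfPlane.I : ℍ) : ℂ) = moebiusMap B Complex.I := by
    simp only [moebius, dif_pos hB]
    rfl
  have him : (moebius B UpperHalfPlane.I).im = (moebiusMap B Complex.I).im := by
    rw [← UpperHalfPlane.coe_im, hco]
  rw [UpperHalfPlane.cosh_dist, hco, him, UpperHalfPlane.I_im, UpperHalfPlane.coe_I]
  by_cases hd : B.det = 1
  · have h1 : B 0 0 * B 1 1 - B 0 1 * B 1 0 = 1 := by rw [← Matrix.det_fin_two]; exact hd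
    rw [moebiusMap, if_pos hd]
    exact key_calc _ _ _ _ h1
  · have hdm : B.det = -1 := hB.resolve_left hd
    have h1 : (-(B 0 0)) * B 1 1 - B 0 1 * (-(B 1 0)) = 1 := by
      have h2 : B 0 0 * B 1 1 - B 0 1 * B 1 0 = -1 := by rw [← Matrix.det_fin_two]; exact hdm
      linarith
    rw [moebiusMap, if_neg hd, Complex.conj_I]
    have heq : ((B 0 0 : ℂ) * (-Complex.I) + B 0 1) / ((B 1 0 : ℂ) * (-Complex.I) + B 1 1)
        = (((-(B 0 0) : ℝ) : ℂ) * Complex.I + B 0 1)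
          / (((-(B 1 0) : ℝ) : ℂ) * Complex.I + B 1 1) := by
      push_cast
      ring_nf
    rw [heq, key_calc _ _ _ _ h1]
    ring

attribute [local instance] Matrix.frobeniusNormedRing Matrix.frobeniusNormedAlgebra

lemma frob_norm_sq (M : Matrix (Fin 2) (Fin 2) ℝ) :
    ‖M.map (algebraMap ℝ ℂ)‖ ^ 2 = M 0 0 ^ 2 + M 0 1 ^ 2 + M 1 0 ^ 2 + M 1 1 ^ 2 := by
  have habs : ∀ x : ℝ, ‖(algebraMap ℝ ℂ) x‖ = ‖x‖ := fun x => by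
    simp [Complex.norm_real]
  rw [Matrix.frobenius_norm_map_eq M _ habs, Matrix.frobenius_norm_def]
  rw [← Real.rpow_natCast _ 2, ← Real.rpow_mul (by positivity)]
  norm_num
  ring


open Filter Topology Function in
/-- For `A ∈ SL₂±(ℝ)`, the stable length of the associated
isometry of `ℍ²` equals `2 log ρ(A)`, where `ρ(A)` is the spectral radius. -/
theorem stmt13 (A : Matrix (Fin 2) (Fin 2) ℝ) (hA : A.det = 1 ∨ A.det = -1)
    (l : ℝ)
    (hl : Tendsto (fun n : ℕ => dist ((moebius A)^[n] UpperHalfPlane.I) UpperHalfPlane.I / n)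
      atTop (nhds l)) :
    l = 2 * Real.log (specRad A) := by
  classical
  set Bc : Matrix (Fin 2) (Fin 2) ℂ := A.map (algebraMap ℝ ℂ) with hBc
  haveI : CompleteSpace (Matrix (Fin 2) (Fin 2) ℂ) := FiniteDimensional.complete ℂ _
  have hpow : ∀ n : ℕ, Bc ^ n = (A ^ n).map (algebraMap ℝ ℂ) := by
    intro n
    simp only [hBc, ← RingHom.mapMatrix_apply, map_pow]
  have hSn : ∀ n : ℕ,
      Real.cosh (dist ((moebius A)^[n] UpperHalfPlane.I) UpperHalfPlane.I)
        = ‖Bc ^ n‖ ^ 2 / 2 := by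
    intro n
    rw [moebius_iterate A hA n, cosh_dist_moebius _ (det_pow_pm A hA n), hpow, frob_norm_sq]
  have hnorm1 : ∀ n : ℕ, (1 : ℝ) ≤ ‖Bc ^ n‖ := by
    intro n
    have h2 : 2 ≤ ‖Bc ^ n‖ ^ 2 := by
      have h3 := hSn n
      nlinarith [Real.one_le_cosh (dist ((moebius A)^[n] UpperHalfPlane.I) UpperHalfPlane.I)]
    nlinarith [norm_nonneg (Bc ^ n)]
  have hG := spectrum.pow_nnnorm_pow_one_div_tendsto_nhds_spectralRadius Bc
  have hrne : spectralRadius ℂ Bc ≠ ⊤ := by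
    have h0 := spectrum.spectralRadius_le_pow_nnnorm_pow_one_div ℂ Bc 0
    simp only [zero_add, pow_one, Nat.cast_one, ENNReal.rpow_one, one_div] at h0
    exact ne_top_of_le_ne_top (ENNReal.mul_ne_top ENNReal.coe_ne_top ENNReal.coe_ne_top)
      (by simpa using h0)
  set ρ : ℝ := (spectralRadius ℂ Bc).toReal with hρ
  have hspec : specRad A = ρ := rfl
  have hρ1 : (1 : ℝ) ≤ ρ := by
    have h1 : (1 : ℝ≥0∞) ≤ spectralRadius ℂ Bc := by
      refine ge_of_tendsto hG ?_
      filter_upwards [Filter.eventually_ge_atTop 1] with n hn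
      have hx : (1 : ℝ≥0∞) ≤ (‖Bc ^ n‖₊ : ℝ≥0∞) := by
        have := hnorm1 n
        exact_mod_cast this
      exact ENNReal.one_le_rpow hx (by positivity)
    calc (1 : ℝ) = (1 : ℝ≥0∞).toReal := by simp
    _ ≤ ρ := ENNReal.toReal_mono hrne h1
  have hρ0 : (0 : ℝ) < ρ := lt_of_lt_of_le one_pos hρ1
  have hGr : Filter.Tendsto (fun n : ℕ => ‖Bc ^ n‖ ^ (1 / n : ℝ)) Filter.atTop (nhds ρ) := by
    have h1 := (ENNReal.tendsto_toReal hrne).comp hG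
    have h2 : (fun n : ℕ => (((‖Bc ^ n‖₊ : ℝ≥0∞) ^ (1 / n : ℝ)).toReal))
        = fun n : ℕ => ‖Bc ^ n‖ ^ (1 / n : ℝ) := by
      funext n
      rw [← ENNReal.toReal_rpow]
      simp
    rw [Function.comp_def, h2] at h1
    exact h1
  have hlog : Filter.Tendsto (fun n : ℕ => Real.log ‖Bc ^ n‖ / n) Filter.atTop
      (nhds (Real.log ρ)) := by
    have hc := (Real.continuousAt_log hρ0.ne').tendsto.comp hGr
    have h2 : (fun n : ℕ => Real.log (‖Bc ^ n‖ ^ (1 / n : ℝ)))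
        = fun n : ℕ => Real.log ‖Bc ^ n‖ / n := by
      funext n
      rw [Real.log_rpow (lt_of_lt_of_le one_pos (hnorm1 n))]
      ring
    rw [Function.comp_def, h2] at hc
    exact hc
  -- squeeze
  set g : ℕ → ℝ := fun n => dist ((moebius A)^[n] UpperHalfPlane.I) UpperHalfPlane.I / n with hg
  have hup : ∀ n : ℕ, 1 ≤ n → g n ≤ 2 * Real.log ‖Bc ^ n‖ / n := by
    intro n hn
    have hd0 : 0 ≤ dist ((moebius A)^[n] UpperHalfPlane.I) UpperHalfPlane.I := dist_nonneg
    set d := dist ((moebius A)^[n] UpperHalfPlane.I) UpperHalfPlane.I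
    have hcosh : Real.cosh d = ‖Bc ^ n‖ ^ 2 / 2 := hSn n
    have hexp : Real.exp d ≤ ‖Bc ^ n‖ ^ 2 := by
      have := Real.cosh_eq d
      nlinarith [Real.exp_pos (-d)]
    have hdle : d ≤ 2 * Real.log ‖Bc ^ n‖ := by
      have h1 : d ≤ Real.log (‖Bc ^ n‖ ^ 2) := by
        have := Real.log_le_log (Real.exp_pos d) hexp
        rwa [Real.log_exp] at this
      rwa [Real.log_pow, Nat.cast_ofNat] at h1
    have hnpos : (0 : ℝ) < n := by exact_mod_cast hn
    exact div_le_div_of_nonneg_right hdle hnpos.le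
  have hlo : ∀ n : ℕ, 1 ≤ n → (2 * Real.log ‖Bc ^ n‖ - Real.log 2) / n ≤ g n := by
    intro n hn
    have hd0 : 0 ≤ dist ((moebius A)^[n] UpperHalfPlane.I) UpperHalfPlane.I := dist_nonneg
    set d := dist ((moebius A)^[n] UpperHalfPlane.I) UpperHalfPlane.I
    have hcosh : Real.cosh d = ‖Bc ^ n‖ ^ 2 / 2 := hSn n
    have hexp : ‖Bc ^ n‖ ^ 2 / 2 ≤ Real.exp d := by
      have h1 := Real.cosh_eq d
      have h2 : Real.exp (-d) ≤ Real.exp d := Real.exp_le_exp.2 (by linarith)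
      nlinarith
    have hdge : 2 * Real.log ‖Bc ^ n‖ - Real.log 2 ≤ d := by
      have hpos : (0 : ℝ) < ‖Bc ^ n‖ ^ 2 / 2 := by
        nlinarith [hnorm1 n]
      have h1 : Real.log (‖Bc ^ n‖ ^ 2 / 2) ≤ d := by
        have := Real.log_le_log hpos hexp
        rwa [Real.log_exp] at this
      rwa [Real.log_div (by nlinarith [hnorm1 n]) (by norm_num), Real.log_pow,
        Nat.cast_ofNat] at h1
    have hnpos : (0 : ℝ) < n := by exact_mod_cast hn
    exact div_le_div_of_nonneg_right hdge hnpos.le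
  have hupT : Filter.Tendsto (fun n : ℕ => 2 * Real.log ‖Bc ^ n‖ / n) Filter.atTop
      (nhds (2 * Real.log ρ)) := by
    have := hlog.const_mul 2
    simpa [mul_div_assoc] using this
  have hloT : Filter.Tendsto (fun n : ℕ => (2 * Real.log ‖Bc ^ n‖ - Real.log 2) / n)
      Filter.atTop (nhds (2 * Real.log ρ)) := by
    have h1 : Filter.Tendsto (fun n : ℕ => Real.log 2 / n) Filter.atTop (nhds 0) := by
      simpa using tendsto_const_nhds.div_atTop
        (tendsto_natCast_atTop_atTop (R := ℝ))
    have h2 := hupT.sub h1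
    simpa [sub_div] using h2
  have hgT : Filter.Tendsto g Filter.atTop (nhds (2 * Real.log ρ)) := by
    refine tendsto_of_tendsto_of_tendsto_of_le_of_le' hloT hupT ?_ ?_
    · filter_upwards [Filter.eventually_ge_atTop 1] with n hn using hlo n hn
    · filter_upwards [Filter.eventually_ge_atTop 1] with n hn using hup n hn
  rw [hspec]
  exact tendsto_nhds_unique hl hgT
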